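/- If C is a proper cycle in a graph G, then I((G,C) ∘ 2K₁; x) = (1+x)^{|C|} · I((G,C) △ K₁; x). -/

import Mathlib

open Polynomial

open scoped Classical in
/-- The independence polynomial of a finite simple graph. -/
noncomputable def indepPoly {V : Type*} [Fintype V] (G : SimpleGraph V) : Polynomial ℤ :=
  ∑ s : Finset V, if (s : Set V).Pairwise (fun u v => ¬ G.Adj u v) then X ^ s.card else 0

/-- `(G,C) ∘ 2H`: each vertex of the cycle `c : ZMod q → V` gets two private copies of `H`. -/
def cycleCorona2 {V W : Type*} (G : SimpleGraph V) (q : ℕ) (c : ZMod q → V)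
    (H : SimpleGraph W) : SimpleGraph (V ⊕ ZMod q × Bool × W) where
  Adj x y :=
    match x, y with
    | .inl u, .inl v => G.Adj u v
    | .inl u, .inr (i, _, _) => u = c i
    | .inr (i, _, _), .inl u => u = c i
    | .inr (i, b, w), .inr (i', b', w') => i = i' ∧ b = b' ∧ H.Adj w w'
  symm := by
    constructor
    rintro (u | ⟨i, b, w⟩) (v | ⟨i', b', w'⟩) h
    · exact G.symm.symm _ _ h
    · exact h
    · exact h
    · exact ⟨h.1.symm, h.2.1.symm, h.2.2.symm⟩
  loopless := by
    constructor
    rintro (u | ⟨i, b, w⟩) h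
    · exact G.loopless.irrefl u h
    · exact H.loopless.irrefl w h.2.2

/-- `(G,C) △ H`: one copy of `H` for each edge of the cycle, joined to its two endpoints. -/
def cycleTriangle {V W : Type*} (G : SimpleGraph V) (q : ℕ) (c : ZMod q → V)
    (H : SimpleGraph W) : SimpleGraph (V ⊕ ZMod q × W) where
  Adj x y :=
    match x, y with
    | .inl u, .inl v => G.Adj u v
    | .inl u, .inr (i, _) => u = c i ∨ u = c (i + 1)
    | .inr (i, _), .inl u => u = c i ∨ u = c (i + 1)
    | .inr (i, w), .inr (i', w') => i = i' ∧ H.Adj w w'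
  symm := by
    constructor
    rintro (u | ⟨i, w⟩) (v | ⟨i', w'⟩) h
    · exact G.symm.symm _ _ h
    · exact h
    · exact h
    · exact ⟨h.1.symm, h.2.symm⟩
  loopless := by
    constructor
    rintro (u | ⟨i, w⟩) h
    · exact G.loopless.irrefl u h
    · exact H.loopless.irrefl w h.2

open scoped Classical

lemma corona_indep_iff {V : Type*} (G : SimpleGraph V) (q : ℕ) (c : ZMod q → V)
    (s : Finset V) (t : Finset (ZMod q × Bool × Fin 1)) :
    ((s.disjSum t : Finset _) : Set _).Pairwise
        (fun u v => ¬ (cycleCorona2 G q c (⊥ : SimpleGraph (Fin 1))).Adj u v) ↔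
      ((s : Set V).Pairwise (fun u v => ¬ G.Adj u v) ∧ ∀ p ∈ t, c p.1 ∉ s) := by
  constructor
  · intro h
    refine ⟨fun u hu v hv huv => h (x := Sum.inl u) (y := Sum.inl v) (by simpa using hu) (by simpa using hv) (by simpa using huv), ?_⟩
    rintro ⟨i, b, w⟩ ht hc
    exact h (x := Sum.inl (c i)) (by simp [hc]) (y := Sum.inr (i, b, w)) (by simp [ht])
      (by simp) rfl
  · rintro ⟨hs, ht⟩
    rintro (u | ⟨i, b, w⟩) hu (v | ⟨i', b', w'⟩) hv hne hadj
    · exact hs (by simpa using hu) (by simpa using hv) (by simpa using hne) hadj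
    · exact ht (i', b', w') (by simpa using hv) (hadj ▸ by simpa using hu)
    · exact ht (i, b, w) (by simpa using hu) (hadj ▸ by simpa using hv)
    · exact hadj.2.2

lemma triangle_indep_iff {V : Type*} (G : SimpleGraph V) (q : ℕ) (c : ZMod q → V)
    (s : Finset V) (t : Finset (ZMod q × Fin 1)) :
    ((s.disjSum t : Finset _) : Set _).Pairwise
        (fun u v => ¬ (cycleTriangle G q c (⊥ : SimpleGraph (Fin 1))).Adj u v) ↔
      ((s : Set V).Pairwise (fun u v => ¬ G.Adj u v) ∧
        ∀ p ∈ t, c p.1 ∉ s ∧ c (p.1 + 1) ∉ s) := by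
  constructor
  · intro h
    refine ⟨fun u hu v hv huv => h (x := Sum.inl u) (y := Sum.inl v) (by simpa using hu) (by simpa using hv) (by simpa using huv), ?_⟩
    rintro ⟨i, w⟩ ht
    constructor
    · intro hc
      exact h (x := Sum.inl (c i)) (by simp [hc]) (y := Sum.inr (i, w)) (by simp [ht])
        (by simp) (Or.inl rfl)
    · intro hc
      exact h (x := Sum.inl (c (i + 1))) (by simp [hc]) (y := Sum.inr (i, w)) (by simp [ht])
        (by simp) (Or.inr rfl)
  · rintro ⟨hs, ht⟩
    rintro (u | ⟨i, w⟩) hu (v | ⟨i', w'⟩) hv hne hadj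
    · exact hs (by simpa using hu) (by simpa using hv) (by simpa using hne) hadj
    · rcases hadj with h1 | h1
      · exact (ht (i', w') (by simpa using hv)).1 (h1 ▸ by simpa using hu)
      · exact (ht (i', w') (by simpa using hv)).2 (h1 ▸ by simpa using hu)
    · rcases hadj with h1 | h1
      · exact (ht (i, w) (by simpa using hu)).1 (h1 ▸ by simpa using hv)
      · exact (ht (i, w) (by simpa using hu)).2 (h1 ▸ by simpa using hv)
    · exact hadj.2

def finsetSumEquiv (V W : Type*) : Finset V × Finset W ≃ Finset (V ⊕ W) where
  toFun p := p.1.disjSum p.2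
  invFun u := (u.toLeft, u.toRight)
  left_inv p := by simp
  right_inv u := Finset.toLeft_disjSum_toRight

lemma indepPoly_disjSum {V W : Type*} [Fintype V] [Fintype W] (G : SimpleGraph (V ⊕ W)) :
    indepPoly G = ∑ s : Finset V, ∑ t : Finset W,
      if ((s.disjSum t : Finset (V ⊕ W)) : Set (V ⊕ W)).Pairwise (fun u v => ¬ G.Adj u v)
      then X ^ (s.card + t.card) else 0 := by
  rw [indepPoly, ← Equiv.sum_comp (finsetSumEquiv V W), Fintype.sum_prod_type]
  exact Finset.sum_congr rfl fun s _ => Finset.sum_congr rfl fun t _ => by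
    simp only [finsetSumEquiv, Equiv.coe_fn_mk, Finset.card_disjSum]


lemma sum_subsets_pow {W : Type*} [Fintype W] [DecidableEq W] (A : Finset W) :
    ∑ t : Finset W, (if t ⊆ A then (X : Polynomial ℤ) ^ t.card else 0) = (1 + X) ^ A.card := by
  rw [← Finset.sum_filter]
  have h : Finset.univ.filter (· ⊆ A) = A.powerset := by
    ext t; simp [Finset.mem_powerset]
  rw [h, add_comm]
  have := Finset.prod_add (fun _ : W => (X : Polynomial ℤ)) (fun _ => 1) A
  simp only [Finset.prod_const, one_pow, mul_one] at this
  exact this.symm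

lemma inner_sum_pow {W : Type*} [Fintype W] [DecidableEq W] (A : Finset W) (n : ℕ) :
    ∑ t : Finset W, (if t ⊆ A then (X : Polynomial ℤ) ^ (n + t.card) else 0) =
      X ^ n * (1 + X) ^ A.card := by
  rw [← sum_subsets_pow A, Finset.mul_sum]
  exact Finset.sum_congr rfl fun t _ => by rw [mul_ite, mul_zero, pow_add]

theorem cycleCorona_two_indepPoly {V : Type*} [Fintype V]
    (G : SimpleGraph V) (q : ℕ) [NeZero q] (hq : 3 ≤ q)
    (c : ZMod q → V) (hinj : Function.Injective c)
    (hadj : ∀ i, G.Adj (c i) (c (i + 1))) :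
    indepPoly (cycleCorona2 G q c (⊥ : SimpleGraph (Fin 1))) =
      (1 + X) ^ q * indepPoly (cycleTriangle G q c (⊥ : SimpleGraph (Fin 1))) := by
  rw [indepPoly_disjSum, indepPoly_disjSum, Finset.mul_sum]
  apply Finset.sum_congr rfl
  intro s _
  simp only [corona_indep_iff, triangle_indep_iff]
  by_cases hs : (s : Set V).Pairwise (fun u v => ¬ G.Adj u v)
  · simp only [hs, true_and]
    have e2 : ∀ t : Finset (ZMod q × Bool × Fin 1), (∀ p ∈ t, c p.1 ∉ s) ↔
        t ⊆ Finset.univ.filter (fun p : ZMod q × Bool × Fin 1 => c p.1 ∉ s) := fun t => by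
      simp [Finset.subset_iff]
    have e1 : ∀ t : Finset (ZMod q × Fin 1), (∀ p ∈ t, c p.1 ∉ s ∧ c (p.1 + 1) ∉ s) ↔
        t ⊆ Finset.univ.filter (fun p : ZMod q × Fin 1 => c p.1 ∉ s ∧ c (p.1 + 1) ∉ s) :=
      fun t => by simp [Finset.subset_iff]
    simp only [e2, e1]
    rw [inner_sum_pow, inner_sum_pow]
    have hZq : Fintype.card (ZMod q) = q := ZMod.card q
    have hB : (Finset.univ.filter (fun i : ZMod q => c i ∈ s)).card
        + (Finset.univ.filter (fun i : ZMod q => c i ∉ s)).card = q := by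
      have := Finset.card_filter_add_card_filter_not
        (s := (Finset.univ : Finset (ZMod q))) (p := fun i => c i ∈ s)
      simpa [Finset.card_univ, hZq] using this
    have hA2 : (Finset.univ.filter (fun p : ZMod q × Bool × Fin 1 => c p.1 ∉ s)).card
        = (Finset.univ.filter (fun i : ZMod q => c i ∉ s)).card * 2 := by
      rw [show (Finset.univ.filter (fun p : ZMod q × Bool × Fin 1 => c p.1 ∉ s))
          = (Finset.univ.filter (fun i : ZMod q => c i ∉ s)) ×ˢ
            (Finset.univ : Finset (Bool × Fin 1)) from by ext ⟨i, b, w⟩; simp]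
      rw [Finset.card_product, Finset.card_univ]
      simp
    have hB1 : (Finset.univ.filter (fun i : ZMod q => c (i + 1) ∈ s)).card
        = (Finset.univ.filter (fun i : ZMod q => c i ∈ s)).card := by
      apply Finset.card_bij (fun i _ => i + 1)
      · intro i hi
        simp only [Finset.mem_filter, Finset.mem_univ, true_and] at hi ⊢
        exact hi
      · intro i _ j _ h; exact add_right_cancel h
      · intro j hj
        simp only [Finset.mem_filter, Finset.mem_univ, true_and] at hj
        exact ⟨j - 1, by simp [hj], by ring⟩
    have hdisj : Disjoint (Finset.univ.filter (fun i : ZMod q => c i ∈ s))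
        (Finset.univ.filter (fun i : ZMod q => c (i + 1) ∈ s)) := by
      rw [Finset.disjoint_left]
      intro i hi0 hi1
      simp only [Finset.mem_filter, Finset.mem_univ, true_and] at hi0 hi1
      exact hs (Finset.mem_coe.2 hi0) (Finset.mem_coe.2 hi1) (hadj i).ne (hadj i)
    have hA1 : (Finset.univ.filter (fun p : ZMod q × Fin 1 =>
          c p.1 ∉ s ∧ c (p.1 + 1) ∉ s)).card
        + ((Finset.univ.filter (fun i : ZMod q => c i ∈ s)).card
          + (Finset.univ.filter (fun i : ZMod q => c i ∈ s)).card) = q := by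
      have hcompl := Finset.card_filter_add_card_filter_not
        (s := (Finset.univ : Finset (ZMod q)))
        (p := fun i => c i ∈ s ∨ c (i + 1) ∈ s)
      have hor : Finset.univ.filter (fun i : ZMod q => c i ∈ s ∨ c (i + 1) ∈ s)
          = Finset.univ.filter (fun i : ZMod q => c i ∈ s)
            ∪ Finset.univ.filter (fun i : ZMod q => c (i + 1) ∈ s) :=
        Finset.filter_or _ _ _
      have hneg : (Finset.univ.filter (fun i : ZMod q => ¬ (c i ∈ s ∨ c (i + 1) ∈ s)))
          = Finset.univ.filter (fun i : ZMod q => c i ∉ s ∧ c (i + 1) ∉ s) := by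
        apply Finset.filter_congr; intro i _; push_neg; rfl
      rw [hor, hneg, Finset.card_union_of_disjoint hdisj, hB1,
        Finset.card_univ, hZq] at hcompl
      have hprodcard : (Finset.univ.filter (fun p : ZMod q × Fin 1 =>
            c p.1 ∉ s ∧ c (p.1 + 1) ∉ s)).card
          = (Finset.univ.filter (fun i : ZMod q => c i ∉ s ∧ c (i + 1) ∉ s)).card := by
        rw [show (Finset.univ.filter (fun p : ZMod q × Fin 1 => c p.1 ∉ s ∧ c (p.1 + 1) ∉ s))
            = (Finset.univ.filter (fun i : ZMod q => c i ∉ s ∧ c (i + 1) ∉ s)) ×ˢ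
              (Finset.univ : Finset (Fin 1)) from by ext ⟨i, w⟩; simp [Subsingleton.elim (0 : Fin 1) w]]
        rw [Finset.card_product, Finset.card_univ]
        simp
      rw [hprodcard]
      omega
    rw [hA2]
    rw [show (Finset.univ.filter (fun p : ZMod q × Fin 1 =>
        c p.1 ∉ s ∧ c (p.1 + 1) ∉ s)).card
      = q - ((Finset.univ.filter (fun i : ZMod q => c i ∈ s)).card
        + (Finset.univ.filter (fun i : ZMod q => c i ∈ s)).card) from by omega]
    rw [show (Finset.univ.filter (fun i : ZMod q => c i ∉ s)).card * 2
      = q + (q - ((Finset.univ.filter (fun i : ZMod q => c i ∈ s)).card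
        + (Finset.univ.filter (fun i : ZMod q => c i ∈ s)).card)) from by omega]
    rw [pow_add]
    ring
  · simp [hs]
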